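/- Type soundness for the RPC calculus: if a term M has type τ at location a under type environment Γ (written Γ ⊢_a M : τ), and M evaluates at location a to value V (written M ⇓_a V), then V has type τ at location a under Γ. -/
import Mathlib


/-! Locations of the RPC calculus: client and server. -/
inductive Loc | c | s
deriving DecidableEq, Repr

/-! Types: base and location-annotated function types τ →^a τ'. -/
inductive Ty | base | arr (t : Ty) (a : Loc) (t' : Ty)
deriving DecidableEq, Repr

/-! Terms of λ_rpc in de Bruijn representation. -/
inductive Tm
| var (n : Nat)
| lam (a : Loc) (body : Tm)
| app (l m : Tm)
deriving DecidableEq, Repr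

/-- Values are variables and λ-abstractions. -/
def IsValue : Tm → Prop
| .var _ => True
| .lam _ _ => True
| .app _ _ => False

/-- de Bruijn lifting. -/
def lift (d : Nat) : Tm → Tm
| .var n => .var (if n < d then n else n + 1)
| .lam a m => .lam a (lift (d + 1) m)
| .app l m => .app (lift d l) (lift d m)

/-- Capture-avoiding substitution of `w` for de Bruijn index `k`. -/
def subst (k : Nat) (w : Tm) : Tm → Tm
| .var n => if n = k then w else .var (if n < k then n else n - 1)
| .lam a m => .lam a (subst (k + 1) (lift 0 w) m)
| .app l m => .app (subst k w l) (subst k w m)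

/-- Big-step semantics M ⇓_a V of λ_rpc. -/
inductive Eval : Loc → Tm → Tm → Prop
| value {a V} : IsValue V → Eval a V V
| beta {a b L M N W V} : Eval a L (.lam b N) → Eval a M W →
    Eval b (subst 0 W N) V → Eval a (.app L M) V

/-- The locative type system Γ ⊢_a M : τ. -/
inductive Typing : List Ty → Loc → Tm → Ty → Prop
| var {Γ a n τ} : Γ[n]? = some τ → Typing Γ a (.var n) τ
| lam {Γ a b M τ τ'} : Typing (τ :: Γ) b M τ' →
    Typing Γ a (.lam b M) (.arr τ b τ')
| app {Γ a L M τ τ'} : Typing Γ a L (.arr τ a τ') → Typing Γ a M τ →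
    Typing Γ a (.app L M) τ'
| req {Γ L M τ τ'} : Typing Γ .c L (.arr τ .s τ') → Typing Γ .c M τ →
    Typing Γ .c (.app L M) τ'
| call {Γ L M τ τ'} : Typing Γ .s L (.arr τ .c τ') → Typing Γ .s M τ →
    Typing Γ .s (.app L M) τ'

lemma eval_isValue {a M V} (h : Eval a M V) : IsValue V := by
  induction h with
  | value hv => exact hv
  | beta _ _ _ _ _ ih => exact ih

lemma value_reloc {Γ a a' V τ} (hv : IsValue V) (h : Typing Γ a V τ) :
    Typing Γ a' V τ := by
  cases h with
  | var h => exact .var h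
  | lam h => exact .lam h
  | app h1 h2 => exact absurd hv (by simp [IsValue])
  | req h1 h2 => exact absurd hv (by simp [IsValue])
  | call h1 h2 => exact absurd hv (by simp [IsValue])

lemma weaken {Γ₁ Γ₂ : List Ty} {a M τ} (σ : Ty) (h : Typing (Γ₁ ++ Γ₂) a M τ) :
    Typing (Γ₁ ++ σ :: Γ₂) a (lift Γ₁.length M) τ := by
  generalize hΓ : Γ₁ ++ Γ₂ = Γ at h
  induction h generalizing Γ₁ with
  | @var Γ a n τ hn =>
    subst hΓ
    simp only [lift]
    refine .var ?_
    split
    · rw [List.getElem?_append_left (by omega)] at hn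
      rw [List.getElem?_append_left (by omega)]
      exact hn
    · rw [List.getElem?_append_right (by omega)] at hn
      rw [List.getElem?_append_right (by omega)]
      simpa [List.getElem?_cons, show ¬ n + 1 - Γ₁.length = 0 by omega,
        show n + 1 - Γ₁.length - 1 = n - Γ₁.length by omega] using hn
  | @lam Γ a b M τ τ' hM ih =>
    exact .lam (ih (Γ₁ := τ :: Γ₁) (by simp [hΓ]))
  | app h1 h2 ih1 ih2 => exact .app (ih1 hΓ) (ih2 hΓ)
  | req h1 h2 ih1 ih2 => exact .req (ih1 hΓ) (ih2 hΓ)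
  | call h1 h2 ih1 ih2 => exact .call (ih1 hΓ) (ih2 hΓ)

lemma subst_typing {Γ₁ Γ₂ : List Ty} {a M W τ σ}
    (h : Typing (Γ₁ ++ σ :: Γ₂) a M τ)
    (hw : ∀ b, Typing (Γ₁ ++ Γ₂) b W σ) :
    Typing (Γ₁ ++ Γ₂) a (subst Γ₁.length W M) τ := by
  generalize hΓ : Γ₁ ++ σ :: Γ₂ = Γ at h
  induction h generalizing Γ₁ W with
  | @var Γ a n τ hn =>
    subst hΓ
    simp only [subst]
    split
    · rename_i heq
      subst heq
      rw [List.getElem?_append_right (le_refl _)] at hn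
      simp at hn
      subst hn
      exact hw a
    · refine .var ?_
      split
      · rw [List.getElem?_append_left (by omega)] at hn
        rw [List.getElem?_append_left (by omega)]
        exact hn
      · rename_i h1 h2
        rw [List.getElem?_append_right (by omega)] at hn
        rw [List.getElem?_append_right (by omega)]
        simpa [List.getElem?_cons, show ¬ n - Γ₁.length = 0 by omega,
          show n - Γ₁.length - 1 = n - 1 - Γ₁.length by omega] using hn
  | @lam Γ a b M τ τ' hM ih =>
    refine .lam (ih (Γ₁ := τ :: Γ₁) ?_ (by simp [hΓ]))
    intro b
    exact weaken (Γ₁ := []) τ (hw b)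
  | app h1 h2 ih1 ih2 => exact .app (ih1 hw hΓ) (ih2 hw hΓ)
  | req h1 h2 ih1 ih2 => exact .req (ih1 hw hΓ) (ih2 hw hΓ)
  | call h1 h2 ih1 ih2 => exact .call (ih1 hw hΓ) (ih2 hw hΓ)

/-- Type soundness for λ_rpc: typing is preserved by evaluation. -/
theorem rpc_type_soundness {Γ : List Ty} {a : Loc} {M V : Tm} {τ : Ty}
    (hty : Typing Γ a M τ) (hev : Eval a M V) : Typing Γ a V τ := by
  induction hev generalizing τ with
  | value _ => exact hty
  | @beta a b L M N W V hL hM hN ihL ihM ihN =>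
    have main : ∀ {τx b'}, Typing Γ a L (.arr τx b' τ) → Typing Γ a M τx →
        Typing Γ a V τ := by
      intro τx b' h1 h2
      have hlam := ihL h1
      cases hlam with
      | lam hbody =>
        have hW : Typing Γ a W τx := ihM h2
        have hWb : ∀ c, Typing Γ c W τx :=
          fun c => value_reloc (eval_isValue hM) hW
        have := subst_typing (Γ₁ := []) hbody (fun c => hWb c)
        exact value_reloc (eval_isValue hN) (ihN this)
    cases hty with
    | app h1 h2 => exact main h1 h2
    | req h1 h2 => exact main h1 h2
    | call h1 h2 => exact main h1 h2
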